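/- Let d > 0 and let f : ℝ → ℝ be C¹ with f > 0 on (0, K) and f < 0 on (K, +∞) for some K > 0. If p : ℝ → ℝ is a bounded C² solution of d·p'' + f(p) = 0 on ℝ with inf p ≥ η for some η > 0, then p ≡ K. -/

import Mathlib

open Set

/-- Core blow-up lemma: if `q` is `C²`, bounded above, strictly convex wherever `q > a`,
and at some point `q x₀ > a` with `deriv q x₀ > 0`, we get a contradiction. -/
private lemma stmt10_core (q : ℝ → ℝ) (hq : ContDiff ℝ 2 q) (B a : ℝ)
    (hB : ∀ x, q x ≤ B)
    (hconv : ∀ x, a < q x → 0 < deriv (deriv q) x)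
    (x₀ : ℝ) (hx₀ : a < q x₀) (hc : 0 < deriv q x₀) : False := by
  have hqd : Differentiable ℝ q := hq.differentiable two_ne_zero
  have hq1 : ContDiff ℝ 1 (deriv q) := by
    have h2 : ContDiff ℝ (1+1) q := by norm_num; exact hq
    exact (contDiff_succ_iff_deriv.mp h2).2.2
  have hq1d : Differentiable ℝ (deriv q) := hq1.differentiable one_ne_zero
  have hqc : Continuous q := hq.continuous
  have hq1c : Continuous (deriv q) := hq1.continuous
  -- growth estimate on intervals where q stays above a
  have grow : ∀ b, x₀ ≤ b → (∀ x ∈ Ioo x₀ b, a < q x) →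
      deriv q x₀ * (b - x₀) ≤ q b - q x₀ := by
    intro b hb hab
    have hcv : Convex ℝ (Icc x₀ b) := convex_Icc _ _
    have hmono : StrictMonoOn (deriv q) (Icc x₀ b) := by
      apply strictMonoOn_of_deriv_pos hcv hq1c.continuousOn
      intro x hx
      rw [interior_Icc] at hx
      exact hconv x (hab x hx)
    apply hcv.mul_sub_le_image_sub_of_le_deriv hqc.continuousOn hqd.differentiableOn
      ?_ x₀ (left_mem_Icc.2 hb) b (right_mem_Icc.2 hb) hb
    intro x hx
    rw [interior_Icc] at hx
    exact (hmono (left_mem_Icc.2 hb) (Ioo_subset_Icc_self hx) hx.1).le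
  -- q stays above a on [x₀, ∞)
  have habove : ∀ x, x₀ ≤ x → a < q x := by
    by_contra h
    push_neg at h
    obtain ⟨z, hz1, hz2⟩ := h
    set A : Set ℝ := {x | x₀ ≤ x ∧ q x ≤ a} with hA
    have hAcl : IsClosed A := by
      have : A = {x | x₀ ≤ x} ∩ {x | q x ≤ a} := rfl
      rw [this]
      exact (isClosed_le continuous_const continuous_id).inter
        (isClosed_le hqc continuous_const)
    have hAne : A.Nonempty := ⟨z, hz1, hz2⟩
    have hAbd : BddBelow A := ⟨x₀, fun y hy => hy.1⟩
    have hbA : sInf A ∈ A := hAcl.csInf_mem hAne hAbd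
    set b := sInf A with hbdef
    have hb1 : x₀ ≤ b := hbA.1
    have hb2 : q b ≤ a := hbA.2
    have hab : ∀ x ∈ Ioo x₀ b, a < q x := by
      intro x hx
      by_contra hqx
      push_neg at hqx
      have : b ≤ x := csInf_le hAbd ⟨hx.1.le, hqx⟩
      exact absurd hx.2 (not_lt.2 this)
    have hgb := grow b hb1 hab
    have hbx : x₀ < b := by
      rcases eq_or_lt_of_le hb1 with h | h
      · exfalso; rw [← h] at hb2; linarith
      · exact h
    have : 0 < deriv q x₀ * (b - x₀) := mul_pos hc (by linarith)
    linarith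
  -- unboundedness contradiction
  set y := x₀ + (B - q x₀ + 1) / deriv q x₀ with hy
  have hBq : q x₀ ≤ B := hB x₀
  have hyx : x₀ ≤ y := by
    have h0 : 0 ≤ (B - q x₀ + 1) / deriv q x₀ := div_nonneg (by linarith) hc.le
    rw [hy]
    linarith
  have hgy := grow y hyx (fun x hx => habove x hx.1.le)
  have hcalc : deriv q x₀ * (y - x₀) = B - q x₀ + 1 := by
    rw [hy]
    field_simp
    ring
  have := hB y
  linarith

/-- Version of the core lemma with no assumption on the sign of `deriv q x₀`. -/
private lemma stmt10_core2 (q : ℝ → ℝ) (hq : ContDiff ℝ 2 q) (B a : ℝ)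
    (hB : ∀ x, q x ≤ B)
    (hconv : ∀ x, a < q x → 0 < deriv (deriv q) x)
    (x₀ : ℝ) (hx₀ : a < q x₀) : False := by
  have hq1 : ContDiff ℝ 1 (deriv q) := by
    have h2 : ContDiff ℝ (1+1) q := by norm_num; exact hq
    exact (contDiff_succ_iff_deriv.mp h2).2.2
  have hq1c : Continuous (deriv q) := hq1.continuous
  have hq2c : Continuous (deriv (deriv q)) := hq1.continuous_deriv le_rfl
  rcases lt_trichotomy (deriv q x₀) 0 with hc | hc | hc
  · -- reflect: r x = q (-x)
    set r : ℝ → ℝ := fun x => q (-x) with hr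
    have hrq : ContDiff ℝ 2 r := hq.comp contDiff_neg
    have hdr : deriv r = fun x => -deriv q (-x) := funext fun x => deriv_comp_neg q x
    have hdr2 : ∀ x, deriv (deriv r) x = deriv (deriv q) (-x) := by
      intro x
      rw [hdr]
      have h1 : deriv (fun x : ℝ => -deriv q (-x)) x
          = -deriv (fun x : ℝ => deriv q (-x)) x := deriv.neg
      rw [h1, deriv_comp_neg (deriv q) x, neg_neg]
    refine stmt10_core r hrq B a (fun x => hB (-x)) ?_ (-x₀) (by simpa [hr] using hx₀) ?_
    · intro x hx
      rw [hdr2]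
      exact hconv (-x) hx
    · rw [hdr]
      simpa using hc
  · -- deriv q x₀ = 0 : use strict convexity near x₀ to find a better point
    have hopen : IsOpen {x | a < q x ∧ 0 < deriv (deriv q) x} :=
      (isOpen_lt continuous_const hq.continuous).inter
        (isOpen_lt continuous_const hq2c)
    have hmem : x₀ ∈ {x | a < q x ∧ 0 < deriv (deriv q) x} := ⟨hx₀, hconv x₀ hx₀⟩
    obtain ⟨ε, hε, hball⟩ := Metric.mem_nhds_iff.mp (hopen.mem_nhds hmem)
    set x₁ := x₀ + ε / 2 with hx₁
    have hsub : Icc x₀ x₁ ⊆ Metric.ball x₀ ε := by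
      intro y hy
      rw [Real.ball_eq_Ioo]
      simp only [mem_Icc] at hy
      rw [hx₁] at hy
      exact ⟨by linarith [hy.1, hy.2], by linarith [hy.1, hy.2]⟩
    have hmono : StrictMonoOn (deriv q) (Icc x₀ x₁) := by
      apply strictMonoOn_of_deriv_pos (convex_Icc _ _) hq1c.continuousOn
      intro x hx
      rw [interior_Icc] at hx
      exact (hball (hsub (Ioo_subset_Icc_self hx))).2
    have hx₁mem : x₁ ∈ Icc x₀ x₁ := right_mem_Icc.2 (by rw [hx₁]; linarith)
    have hx₀mem : x₀ ∈ Icc x₀ x₁ := left_mem_Icc.2 (by rw [hx₁]; linarith)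
    have hd1 : 0 < deriv q x₁ := by
      have := hmono hx₀mem hx₁mem (by rw [hx₁]; linarith)
      rw [hc] at this
      exact this
    have hq1pos : a < q x₁ := (hball (hsub hx₁mem)).1
    exact stmt10_core q hq B a hB hconv x₁ hq1pos hd1
  · exact stmt10_core q hq B a hB hconv x₀ hx₀ hc

theorem stmt10 (d K η : ℝ) (hd : 0 < d) (hK : 0 < K) (hη : 0 < η)
    (f : ℝ → ℝ) (hf : ContDiff ℝ 1 f)
    (hfpos : ∀ s ∈ Set.Ioo 0 K, 0 < f s)
    (hfneg : ∀ s ∈ Set.Ioi K, f s < 0)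
    (p : ℝ → ℝ) (hp : ContDiff ℝ 2 p)
    (hbdd : ∃ B : ℝ, ∀ x : ℝ, |p x| ≤ B)
    (heq : ∀ x : ℝ, d * deriv (deriv p) x + f (p x) = 0)
    (hinf : ∀ x : ℝ, η ≤ p x) :
    ∀ x : ℝ, p x = K := by
  obtain ⟨B, hB⟩ := hbdd
  have hDD : ∀ x, deriv (deriv p) x = -f (p x) / d := by
    intro x
    rw [eq_div_iff hd.ne']
    linarith [heq x]
  intro x
  rcases lt_trichotomy (p x) K with h | h | h
  · -- p x < K : apply core2 to -p with threshold -K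
    exfalso
    refine stmt10_core2 (fun y => -p y) hp.neg B (-K)
      (fun y => by show -p y ≤ B; linarith [(abs_le.mp (hB y)).1]) ?_ x
      (by show -K < -p x; linarith)
    intro y hy
    have hy' : p y < K := neg_lt_neg_iff.mp hy
    have hfp : 0 < f (p y) := hfpos (p y) ⟨lt_of_lt_of_le hη (hinf y), hy'⟩
    have hd2 : deriv (deriv fun y => -p y) y = -deriv (deriv p) y := by
      have h1 : (deriv fun y => -p y) = fun y => -deriv p y := funext fun z => deriv.neg
      rw [h1]
      exact deriv.neg
    rw [hd2, hDD y, neg_div, neg_neg]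
    exact div_pos hfp hd
  · exact h
  · -- p x > K : apply core2 to p with threshold K
    exfalso
    refine stmt10_core2 p hp B K (fun y => (abs_le.mp (hB y)).2) ?_ x h
    intro y hy
    have hfp : f (p y) < 0 := hfneg (p y) hy
    rw [hDD y]
    exact div_pos (by linarith) hd
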